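/- Let E be a finite directed graph with isolated cycles containing at least one cycle. Then there exists a hereditary and saturated subset H of E⁰ such that the quotient graph E/H contains exactly one cycle, that cycle has no exit in E/H, and E/H equals the hereditary and saturated closure (within E/H) of the vertex set of that cycle. -/

import Mathlib

/-- A directed graph `E = (E⁰, E¹, s, r)`. -/
structure DGraph where
  V : Type
  E : Type
  s : E → V
  r : E → V

namespace DGraph

variable (G : DGraph)

/-- A list of edges forms a path if consecutive edges are composable. -/
def IsPath (p : List G.E) : Prop := p.Chain' (fun e f => G.r e = G.s f)

/-- A closed simple path based at `v`: a nonempty path starting and ending at `v` such that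
no intermediate edge has source `v`. -/
def IsClosedSimplePath (v : G.V) (p : List G.E) : Prop :=
  p ≠ [] ∧ G.IsPath p ∧
    (∀ h : p ≠ [], G.s (p.head h) = v ∧ G.r (p.getLast h) = v) ∧
    ∀ i : Fin p.length, 0 < (i : ℕ) → G.s (p.get i) ≠ v

/-- A cycle: a nonempty closed path all of whose edges have pairwise distinct sources. -/
def IsCycle (p : List G.E) : Prop :=
  p ≠ [] ∧ G.IsPath p ∧
    (∀ h : p ≠ [], G.r (p.getLast h) = G.s (p.head h)) ∧ (p.map G.s).Nodup

/-- The graph `G` has isolated cycles: whenever two closed simple paths share the source of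
some of their edges, the corresponding edges coincide. -/
def IsolatedCycles : Prop :=
  ∀ v w (p q : List G.E), G.IsClosedSimplePath v p → G.IsClosedSimplePath w q →
    ∀ (i : Fin p.length) (j : Fin q.length),
      G.s (p.get i) = G.s (q.get j) → p.get i = q.get j

/-- `v ≥ w` : there is a (possibly empty) finite directed path from `v` to `w`. -/
def Reaches : G.V → G.V → Prop :=
  Relation.ReflTransGen (fun a b => ∃ e : G.E, G.s e = a ∧ G.r e = b)

/-- The relation `C ≥ C'` on cycles: some vertex of `C` reaches some vertex of `C'`. -/
def CycleGE (p q : List G.E) : Prop :=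
  ∃ v w : G.V, v ∈ p.map G.s ∧ w ∈ q.map G.s ∧ G.Reaches v w

end DGraph

open DGraph

/-- `H` is hereditary: sources in `H` force ranges in `H`. -/
def DGraph.Hereditary (G : DGraph) (H : Set G.V) : Prop :=
  ∀ e : G.E, G.s e ∈ H → G.r e ∈ H

/-- `H` is saturated: a vertex emitting at least one edge, all of whose ranges lie in `H`,
lies in `H`. -/
def DGraph.Saturated (G : DGraph) (H : Set G.V) : Prop :=
  ∀ v : G.V, (∃ e : G.E, G.s e = v) → (∀ e : G.E, G.s e = v → G.r e ∈ H) → v ∈ H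

/-- A cycle of the quotient graph `E/H`: a cycle of `E` all of whose edges avoid `H`. -/
def DGraph.IsCycleQ (G : DGraph) (H : Set G.V) (p : List G.E) : Prop :=
  G.IsCycle p ∧ ∀ e ∈ p, G.s e ∉ H ∧ G.r e ∉ H

/-- The cycle `p` has an exit in the quotient graph `E/H`: some vertex on `p` emits an edge
of `E/H` not belonging to `p`. -/
def DGraph.HasExitQ (G : DGraph) (H : Set G.V) (p : List G.E) : Prop :=
  ∃ e : G.E, G.s e ∈ p.map G.s ∧ G.r e ∉ H ∧ e ∉ p

/-- `K` is a hereditary subset of the quotient graph `E/H`. -/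
def DGraph.HereditaryQ (G : DGraph) (H : Set G.V) (K : Set G.V) : Prop :=
  ∀ e : G.E, G.r e ∉ H → G.s e ∈ K → G.r e ∈ K

/-- `K` is a saturated subset of the quotient graph `E/H`. -/
def DGraph.SaturatedQ (G : DGraph) (H : Set G.V) (K : Set G.V) : Prop :=
  ∀ v : G.V, v ∉ H → (∃ e : G.E, G.s e = v ∧ G.r e ∉ H) →
    (∀ e : G.E, G.s e = v → G.r e ∉ H → G.r e ∈ K) → v ∈ K

namespace DGraph
variable {G : DGraph}

lemma Reaches.trans {a b c : G.V} (h1 : G.Reaches a b) (h2 : G.Reaches b c) : G.Reaches a c :=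
  Relation.ReflTransGen.trans h1 h2

lemma reaches_step {a b : G.V} (e : G.E) (hs : G.s e = a) (hr : G.r e = b) : G.Reaches a b :=
  Relation.ReflTransGen.single ⟨e, hs, hr⟩

/-- Along a path, the source of the head reaches the range of the last edge. -/
lemma reaches_of_path : ∀ (p : List G.E), G.IsPath p → ∀ h : p ≠ [],
    G.Reaches (G.s (p.head h)) (G.r (p.getLast h))
  | [], _, h => absurd rfl h
  | [e], _, _ => reaches_step e rfl rfl
  | e :: f :: t, hp, _ => by
    have hchain : G.r e = G.s f := (List.isChain_cons_cons.mp hp).1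
    have ht : G.IsPath (f :: t) := (List.isChain_cons_cons.mp hp).2
    have := reaches_of_path (f :: t) ht (by simp)
    have h1 : G.Reaches (G.s e) (G.s f) := reaches_step e rfl hchain
    simpa [List.getLast_cons] using h1.trans this

lemma reaches_src_getLast {p : List G.E} (hp : G.IsPath p) {e : G.E} (he : e ∈ p) :
    G.Reaches (G.s e) (G.r (p.getLast (List.ne_nil_of_mem he))) := by
  obtain ⟨l₁, l₂, rfl⟩ := List.append_of_mem he
  have hsuf : G.IsPath (e :: l₂) := hp.suffix ⟨l₁, rfl⟩
  have h2 : (e :: l₂) ≠ [] := by simp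
  have := reaches_of_path (e :: l₂) hsuf h2
  have hL : (l₁ ++ e :: l₂).getLast (List.ne_nil_of_mem he) = (e :: l₂).getLast h2 := by
    rw [List.getLast_append]
    simp
  rw [hL]
  simpa using this

lemma reaches_head_src {p : List G.E} (hp : G.IsPath p) (h : p ≠ []) {e : G.E} (he : e ∈ p) :
    G.Reaches (G.s (p.head h)) (G.s e) := by
  obtain ⟨l₁, l₂, rfl⟩ := List.append_of_mem he
  rcases eq_or_ne l₁ [] with rfl | hl₁
  · simp
    exact Relation.ReflTransGen.refl
  · have hsplit : G.IsPath (l₁ ++ [e]) := ((List.isChain_split (l₁ := l₁) (l₂ := l₂) (c := e)).mp hp).1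
    have h1 : G.IsPath l₁ := hsplit.prefix ⟨[e], rfl⟩
    have hjun : G.r (l₁.getLast hl₁) = G.s e := by
      have h2 := (List.isChain_append.mp hsplit).2.2
      exact h2 _ (by rw [List.getLast?_eq_getLast hl₁]; rfl) e rfl
    have hhead : l₁.head hl₁ = (l₁ ++ e :: l₂).head h := by
      rw [List.head_append]
      simp [hl₁]
    have := reaches_of_path l₁ h1 hl₁
    rw [hjun, hhead] at this
    exact this


/-- From `Reaches` extract an explicit path. -/
lemma path_of_reaches {a b : G.V} (h : G.Reaches a b) :
    ∃ ρ : List G.E, G.IsPath ρ ∧ (ρ = [] → a = b) ∧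
      ∀ hρ : ρ ≠ [], G.s (ρ.head hρ) = a ∧ G.r (ρ.getLast hρ) = b := by
  induction h using Relation.ReflTransGen.head_induction_on with
  | refl => exact ⟨[], List.isChain_nil, fun _ => rfl, fun h => absurd rfl h⟩
  | head h' _ ih =>
    obtain ⟨e, hse, hre⟩ := h'
    obtain ⟨ρ, hρ, hnil, hends⟩ := ih
    refine ⟨e :: ρ, ?_, by simp, fun hne => ?_⟩
    · rw [IsPath, List.Chain', List.isChain_cons]
      refine ⟨fun y hy => ?_, hρ⟩
      rcases ρ with _ | ⟨f, t⟩
      · simp at hy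
      · simp at hy
        subst hy
        rw [hre]
        exact ((hends (by simp)).1).symm
    · constructor
      · simpa using hse
      · rcases eq_or_ne ρ [] with rfl | hρne
        · simpa using hre.trans (hnil rfl)
        · rw [List.getLast_cons hρne]
          exact (hends hρne).2

/-- In a cycle, the range of any edge is the source of some edge. -/
lemma range_mem_src {p : List G.E} (hc : G.IsCycle p) {e : G.E} (he : e ∈ p) :
    G.r e ∈ p.map G.s := by
  obtain ⟨hne, hp, hcl, _⟩ := hc
  obtain ⟨i, hi, rfl⟩ := List.getElem_of_mem he
  rcases lt_or_ge (i+1) p.length with h1 | h1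
  · have := List.isChain_iff_getElem.mp hp i (by omega)
    rw [this]
    exact List.mem_map_of_mem (List.getElem_mem _)
  · have hi' : i = p.length - 1 := by omega
    have : p[i] = p.getLast hne := by
      rw [List.getLast_eq_getElem]; congr 1
    rw [this, hcl hne, List.head_eq_getElem]
    exact List.mem_map_of_mem (List.getElem_mem _)

/-- Any vertex on a cycle reaches any other vertex on the cycle. -/
lemma cycle_reaches {p : List G.E} (hc : G.IsCycle p) {u w : G.V}
    (hu : u ∈ p.map G.s) (hw : w ∈ p.map G.s) : G.Reaches u w := by
  obtain ⟨hne, hp, hcl, _⟩ := hc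
  obtain ⟨e, he, rfl⟩ := List.mem_map.mp hu
  obtain ⟨f, hf, rfl⟩ := List.mem_map.mp hw
  exact (reaches_src_getLast hp he).trans ((hcl hne) ▸ reaches_head_src hp hne hf)

/-- A cycle whose head has source `v` is a closed simple path at `v`. -/
lemma csp_of_cycle {p : List G.E} (hc : G.IsCycle p) (h : p ≠ []) (hv : G.s (p.head h) = v) :
    G.IsClosedSimplePath v p := by
  obtain ⟨hne, hp, hcl, hnd⟩ := hc
  refine ⟨hne, hp, fun h' => ⟨hv, (hcl h').trans hv⟩, fun i hi hsi => ?_⟩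
  have h0 : (0:ℕ) < p.length := List.length_pos_iff.mpr hne
  have hinj := List.nodup_iff_injective_get.mp hnd
  have : (p.map G.s).get ⟨i, by simpa using i.2⟩ = (p.map G.s).get ⟨0, by rw [List.length_map]; exact h0⟩ := by
    simp only [List.get_eq_getElem, List.getElem_map]
    rw [← List.head_eq_getElem hne]
    simp only [List.get_eq_getElem] at hsi
    rw [hsi, hv]
  have := hinj this
  simp only [Fin.mk.injEq] at this
  omega


/-- Consecutive edges in a path compose. -/
lemma chain_step {p : List G.E} (hp : G.IsPath p) {i j : ℕ} (hj : j < p.length) (hij : i + 1 = j) :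
    G.r (p[i]'(by omega)) = G.s (p[j]'hj) := by
  subst hij
  simpa using List.isChain_iff_getElem.mp hp i (by omega)

lemma exists_rotation {p : List G.E} (hc : G.IsCycle p) {u : G.V} (hu : u ∈ p.map G.s) :
    ∃ p', G.IsCycle p' ∧ p' ~r p ∧ ∃ h : p' ≠ [], G.s (p'.head h) = u := by
  obtain ⟨e, he, rfl⟩ := List.mem_map.mp hu
  obtain ⟨i, hi, rfl⟩ := List.getElem_of_mem he
  obtain ⟨hne, hp, hcl, hnd⟩ := hc
  rcases Nat.eq_zero_or_pos i with rfl | hipos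
  · exact ⟨p, ⟨hne, hp, hcl, hnd⟩, List.IsRotated.refl p, hne, by rw [List.head_eq_getElem]⟩
  · have hlen : (p.rotate i).length = p.length := List.length_rotate p i
    have hple : 0 < p.length := by omega
    have pne : p.rotate i ≠ [] := by
      intro h; rw [← List.length_eq_zero_iff, hlen] at *; omega
    have hhead : (p.rotate i).head pne = p[i] := by
      rw [List.head_eq_getElem, List.getElem_rotate]
      congr 1
      rw [Nat.zero_add, Nat.mod_eq_of_lt hi]
    have hgetLast : (p.rotate i).getLast pne = p[i-1]'(by omega) := by
      rw [List.getLast_eq_getElem, List.getElem_rotate]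
      congr 1
      rw [hlen]
      have h1 : p.length - 1 + i = p.length + (i - 1) := by omega
      rw [h1, Nat.add_mod_left, Nat.mod_eq_of_lt (by omega)]
    have hrot : p.rotate i = p.drop i ++ p.take i := List.rotate_eq_drop_append_take (le_of_lt hi)
    have dne : p.drop i ≠ [] := by
      intro h; have := (List.length_drop : (p.drop i).length = p.length - i); rw [h] at this; simp at this; omega
    have tne : p.take i ≠ [] := by
      intro h; have := (List.length_take : (p.take i).length = min i p.length); rw [h] at this; simp at this; omega
    refine ⟨p.rotate i, ⟨pne, ?_, fun h' => ?_, ?_⟩, List.IsRotated.forall p i, pne, ?_⟩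
    · rw [IsPath, hrot, List.Chain', List.isChain_append]
      refine ⟨hp.drop i, hp.take i, fun x hx y hy => ?_⟩
      rw [List.getLast?_eq_getLast dne, Option.mem_some_iff] at hx
      rw [List.head?_eq_head tne, Option.mem_some_iff] at hy
      subst hx; subst hy
      rw [List.getLast_drop, List.head_take]
      exact hcl hne
    · rw [hgetLast, hhead]
      exact chain_step hp hi (by omega)
    · rw [List.map_rotate]
      exact (((p.map G.s).rotate_perm i).symm.nodup hnd)
    · rw [hhead]

/-- Two closed simple paths at the same base vertex agree (isolated cycles). -/
lemma csp_get_eq (hiso : G.IsolatedCycles) {v : G.V} {p q : List G.E}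
    (hp : G.IsClosedSimplePath v p) (hq : G.IsClosedSimplePath v q) :
    ∀ i (hip : i < p.length) (hiq : i < q.length), p[i] = q[i] := by
  intro i
  induction i using Nat.strong_induction_on with
  | _ i IH =>
    intro hip hiq
    have hsrc : G.s p[i] = G.s q[i] := by
      rcases Nat.eq_zero_or_pos i with rfl | hpos
      · rw [← List.head_eq_getElem hp.1, ← List.head_eq_getElem hq.1,
          (hp.2.2.1 hp.1).1, (hq.2.2.1 hq.1).1]
      · rw [← chain_step hp.2.1 hip (by omega : i - 1 + 1 = i),
          ← chain_step hq.2.1 hiq (by omega : i - 1 + 1 = i),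
          IH (i-1) (by omega) (by omega) (by omega)]
    have := hiso v v p q hp hq ⟨i, hip⟩ ⟨i, hiq⟩ (by simpa using hsrc)
    simpa using this

lemma csp_not_lt (hiso : G.IsolatedCycles) {v : G.V} {p q : List G.E}
    (hp : G.IsClosedSimplePath v p) (hq : G.IsClosedSimplePath v q) :
    ¬ p.length < q.length := by
  intro hlt
  have hpne := hp.1
  have hl : 0 < p.length := List.length_pos_iff.mpr hpne
  have h1 : G.s (q[p.length]'hlt) = v := by
    rw [← chain_step hq.2.1 hlt (by omega : p.length - 1 + 1 = p.length),
      ← csp_get_eq hiso hp hq (p.length - 1) (by omega) (by omega)]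
    have h2 : p[p.length - 1]'(by omega) = p.getLast hpne := by
      rw [List.getLast_eq_getElem]
    rw [h2]
    exact (hp.2.2.1 hpne).2
  exact hq.2.2.2 ⟨p.length, hlt⟩ hl (by simpa using h1)

lemma csp_unique (hiso : G.IsolatedCycles) {v : G.V} {p q : List G.E}
    (hp : G.IsClosedSimplePath v p) (hq : G.IsClosedSimplePath v q) : p = q := by
  have hlen : p.length = q.length := by
    rcases Nat.lt_trichotomy p.length q.length with h | h | h
    · exact absurd h (csp_not_lt hiso hp hq)
    · exact h
    · exact absurd h (csp_not_lt hiso hq hp)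
  apply List.ext_getElem hlen
  intro i h1 h2
  exact csp_get_eq hiso hp hq i h1 h2


/-- From any closed walk at `v`, extract a closed simple path at `v` with the same head. -/
lemma exists_csp_prefix {v : G.V} : ∀ (n : ℕ) (w : List G.E), w.length ≤ n → G.IsPath w →
    ∀ h : w ≠ [], G.s (w.head h) = v → G.r (w.getLast h) = v →
    ∃ τ, G.IsClosedSimplePath v τ ∧ ∃ hτ : τ ≠ [], τ.head hτ = w.head h ∧ ∀ e ∈ τ, e ∈ w := by
  intro n
  induction n with
  | zero =>
    intro w hw _ h _ _
    exact absurd (List.length_eq_zero_iff.mp (Nat.le_zero.mp hw)) h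
  | succ m IH =>
    intro w hw hp h hhead hlast
    by_cases hsimp : ∀ i : Fin w.length, 0 < (i : ℕ) → G.s (w.get i) ≠ v
    · exact ⟨w, ⟨h, hp, fun h' => ⟨hhead, hlast⟩, hsimp⟩, h, rfl, fun e he => he⟩
    · push_neg at hsimp
      obtain ⟨i, hipos, hiv⟩ := hsimp
      simp only [List.get_eq_getElem] at hiv
      have hilen : (i : ℕ) < w.length := i.2
      have tne : w.take i ≠ [] := by
        intro hcon; have := (List.length_take : (w.take i).length = min (i : ℕ) w.length); rw [hcon] at this; simp at this; omega
      have hlen' : (w.take i).length ≤ m := by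
        rw [List.length_take]; omega
      have hhead' : (w.take i).head tne = w.head h := List.head_take tne
      have hlast' : G.r ((w.take i).getLast tne) = v := by
        rw [List.getLast_take, List.getElem?_eq_getElem (by omega : (i:ℕ) - 1 < w.length),
          Option.getD_some, chain_step hp hilen (by omega : (i:ℕ) - 1 + 1 = i), hiv]
      obtain ⟨τ, hτcsp, hτne, hτhead, hτmem⟩ :=
        IH (w.take i) hlen' (hp.take i) tne (by rw [hhead', hhead]) hlast'
      exact ⟨τ, hτcsp, hτne, by rw [hτhead, hhead'], fun e he => (w.take_subset i) (hτmem e he)⟩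

/-- From any closed walk, extract a cycle with the same head. -/
lemma exists_cycle_of_closed_walk : ∀ (n : ℕ) (w : List G.E), w.length ≤ n → G.IsPath w →
    ∀ h : w ≠ [], G.r (w.getLast h) = G.s (w.head h) →
    ∃ q, G.IsCycle q ∧ (∃ hq : q ≠ [], q.head hq = w.head h) ∧ ∀ e ∈ q, e ∈ w := by
  intro n
  induction n with
  | zero =>
    intro w hw _ h _
    exact absurd (List.length_eq_zero_iff.mp (Nat.le_zero.mp hw)) h
  | succ m IH =>
    intro w hw hp h hclosed
    by_cases hnd : (w.map G.s).Nodup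
    · exact ⟨w, ⟨h, hp, fun _ => hclosed, hnd⟩, ⟨h, rfl⟩, fun e he => he⟩
    · rw [List.nodup_iff_injective_get] at hnd
      rw [Function.not_injective_iff] at hnd
      obtain ⟨a, b, hab, hne⟩ := hnd
      -- convert to indices with i < j and equal sources
      have hmaplen : (w.map G.s).length = w.length := List.length_map G.s
      obtain ⟨i, j, hij, hsij⟩ :
          ∃ i j : ℕ, ∃ hij : i < j ∧ j < w.length,
            G.s (w[i]'(by omega)) = G.s (w[j]'hij.2) := by
        rcases lt_or_gt_of_ne (Fin.val_ne_of_ne hne) with hlt | hgt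
        · refine ⟨a, b, ⟨hlt, by omega⟩, ?_⟩
          have := hab
          simp only [List.get_eq_getElem, List.getElem_map] at this
          exact this
        · refine ⟨b, a, ⟨hgt, by omega⟩, ?_⟩
          have := hab.symm
          simp only [List.get_eq_getElem, List.getElem_map] at this
          exact this
      obtain ⟨hij, hjlen⟩ := hij
      rcases Nat.eq_zero_or_pos i with rfl | hipos
      · -- drop everything from index j on
        have tne : w.take j ≠ [] := by
          intro hcon; have := (List.length_take : (w.take j).length = min j w.length); rw [hcon] at this; simp at this; omega
        have hlen' : (w.take j).length ≤ m := by rw [List.length_take]; omega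
        have hhead' : (w.take j).head tne = w.head h := List.head_take tne
        have hclosed' : G.r ((w.take j).getLast tne) = G.s ((w.take j).head tne) := by
          rw [List.getLast_take, List.getElem?_eq_getElem (by omega : j - 1 < w.length),
            Option.getD_some, chain_step hp hjlen (by omega : j - 1 + 1 = j), ← hsij, hhead',
            List.head_eq_getElem]
        obtain ⟨q, hq, ⟨hqne, hqhead⟩, hqmem⟩ := IH (w.take j) hlen' (hp.take j) tne hclosed'
        exact ⟨q, hq, ⟨hqne, by rw [hqhead, hhead']⟩, fun e he => (w.take_subset j) (hqmem e he)⟩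
      · -- cut out the segment [i, j)
        have tne : w.take i ≠ [] := by
          intro hcon; have := (List.length_take : (w.take i).length = min i w.length); rw [hcon] at this; simp at this; omega
        have dne : w.drop j ≠ [] := by
          intro hcon; have := (List.length_drop : (w.drop j).length = w.length - j); rw [hcon] at this; simp at this; omega
        have w'ne : w.take i ++ w.drop j ≠ [] := by simp [tne]
        have hlen' : (w.take i ++ w.drop j).length ≤ m := by
          rw [List.length_append, List.length_take, List.length_drop]; omega
        have hhead' : (w.take i ++ w.drop j).head w'ne = w.head h := by
          rw [List.head_append, dif_neg (by simpa using tne), List.head_take]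
        have hlast' : (w.take i ++ w.drop j).getLast w'ne = w.getLast h := by
          rw [List.getLast_append, dif_neg (by simpa using dne), List.getLast_drop]
        have hpath' : G.IsPath (w.take i ++ w.drop j) := by
          rw [IsPath, List.Chain', List.isChain_append]
          refine ⟨hp.take i, hp.drop j, fun x hx y hy => ?_⟩
          rw [List.getLast?_eq_getLast tne, Option.mem_some_iff] at hx
          rw [List.head?_eq_head dne, Option.mem_some_iff] at hy
          subst hx; subst hy
          rw [List.getLast_take, List.getElem?_eq_getElem (by omega : i - 1 < w.length),
            Option.getD_some, chain_step hp (by omega : i < w.length) (by omega : i - 1 + 1 = i),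
            hsij, List.head_drop]
        have hclosed' : G.r ((w.take i ++ w.drop j).getLast w'ne) = G.s ((w.take i ++ w.drop j).head w'ne) := by
          rw [hhead', hlast', hclosed]
        obtain ⟨q, hq, ⟨hqne, hqhead⟩, hqmem⟩ := IH _ hlen' hpath' w'ne hclosed'
        refine ⟨q, hq, ⟨hqne, by rw [hqhead, hhead']⟩, fun e he => ?_⟩
        have := hqmem e he
        rw [List.mem_append] at this
        rcases this with h1 | h1
        · exact w.take_subset i h1
        · exact w.drop_subset j h1


/-- Key lemma: if `u` lies on a cycle and `e` is an edge out of `u` whose range reaches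
back to `u`, then `e` belongs to the cycle. -/
lemma edge_mem_cycle (hiso : G.IsolatedCycles) {p : List G.E} (hc : G.IsCycle p)
    {u : G.V} (hu : u ∈ p.map G.s) {e : G.E} (hse : G.s e = u)
    (hre : G.Reaches (G.r e) u) : e ∈ p := by
  obtain ⟨p', hc', hrot, hne', hhead'⟩ := exists_rotation hc hu
  have hcsp' : G.IsClosedSimplePath u p' := csp_of_cycle hc' hne' hhead'
  obtain ⟨ρ, hρ, hρnil, hρends⟩ := path_of_reaches hre
  -- the walk e :: ρ is a closed walk at u
  have hwne : (e :: ρ) ≠ [] := by simp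
  have hwpath : G.IsPath (e :: ρ) := by
    rw [IsPath, List.Chain', List.isChain_cons]
    refine ⟨fun y hy => ?_, hρ⟩
    rcases ρ with _ | ⟨f, t⟩
    · simp at hy
    · simp at hy
      subst hy
      exact ((hρends (by simp)).1).symm
  have hwhead : G.s ((e :: ρ).head hwne) = u := by simpa using hse
  have hwlast : G.r ((e :: ρ).getLast hwne) = u := by
    rcases eq_or_ne ρ [] with rfl | hρne
    · simpa using hρnil rfl
    · rw [List.getLast_cons hρne]
      exact (hρends hρne).2
  obtain ⟨τ, hτcsp, hτne, hτhead, _⟩ :=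
    exists_csp_prefix (e :: ρ).length (e :: ρ) le_rfl hwpath hwne hwhead hwlast
  have hτp : τ = p' := csp_unique hiso hτcsp hcsp'
  have : e ∈ τ := by
    have : τ.head hτne = e := by simpa using hτhead
    rw [← this]
    exact List.head_mem hτne
  rw [hτp] at this
  exact hrot.mem_iff.mp this

/-- If `u` is on cycle `p`, `u` reaches `w` and `w` reaches back to the cycle, then
`w` is on the cycle. -/
lemma mem_sources_of_reaches (hiso : G.IsolatedCycles) {p : List G.E} (hc : G.IsCycle p)
    {u w : G.V} (hu : u ∈ p.map G.s) (huw : G.Reaches u w) (hw : G.Reaches w u) :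
    w ∈ p.map G.s := by
  obtain ⟨ρ, hρ, hρnil, hρends⟩ := path_of_reaches huw
  clear huw
  induction ρ generalizing u with
  | nil => exact (hρnil rfl) ▸ hu
  | cons e t IH =>
    have hse : G.s e = u := by simpa using (hρends (by simp)).1
    have hret : G.Reaches (G.r e) w := by
      rcases eq_or_ne t [] with rfl | htne
      · have : G.r e = w := by simpa using (hρends (by simp)).2
        exact this ▸ Relation.ReflTransGen.refl
      · have htpath : G.IsPath t := (List.isChain_cons.mp hρ).2
        have hthead : G.s (t.head htne) = G.r e := by
          have := (List.isChain_cons.mp hρ).1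
          have h2 := this (t.head htne) (by rw [List.head?_eq_head htne]; rfl)
          exact h2.symm
        have htlast : G.r (t.getLast htne) = w := by
          have := (hρends (by simp)).2
          rwa [List.getLast_cons htne] at this
        have := reaches_of_path t htpath htne
        rw [hthead, htlast] at this
        exact this
    have hreu : G.Reaches (G.r e) u := hret.trans hw
    have hep : e ∈ p := edge_mem_cycle hiso hc hu hse hreu
    have hrep : G.r e ∈ p.map G.s := range_mem_src hc hep
    rcases eq_or_ne t [] with rfl | htne
    · have : G.r e = w := by simpa using (hρends (by simp)).2
      exact this ▸ hrep
    · have htpath : G.IsPath t := (List.isChain_cons.mp hρ).2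
      refine IH hrep (hw.trans (cycle_reaches hc hu hrep)) htpath
        (fun hnil => absurd hnil htne) (fun h' => ?_)
      constructor
      · have := (List.isChain_cons.mp hρ).1
        exact (this (t.head h') (by rw [List.head?_eq_head h']; rfl)).symm
      · have := (hρends (by simp)).2
        rwa [List.getLast_cons h'] at this


/-- Build a closed walk at `v` starting with a given edge out of `v` whose range
reaches back to `v`. -/
lemma closed_walk_of_edge {v : G.V} {f : G.E} (hsf : G.s f = v) (hrv : G.Reaches (G.r f) v) :
    ∃ w : List G.E, G.IsPath w ∧ ∃ hw : w ≠ [], w.head hw = f ∧ G.r (w.getLast hw) = v := by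
  obtain ⟨ρ, hρ, hρnil, hρends⟩ := path_of_reaches hrv
  have hwne : (f :: ρ) ≠ [] := by simp
  refine ⟨f :: ρ, ?_, hwne, rfl, ?_⟩
  · rw [IsPath, List.Chain', List.isChain_cons]
    refine ⟨fun y hy => ?_, hρ⟩
    rcases ρ with _ | ⟨g, t⟩
    · simp at hy
    · simp at hy
      subst hy
      exact ((hρends (by simp)).1).symm
  · rcases eq_or_ne ρ [] with rfl | hρne
    · simpa using hρnil rfl
    · rw [List.getLast_cons hρne]
      exact (hρends hρne).2

end DGraph

/-- Proposition 2.8 (key step): a finite graph with isolated cycles containing at least one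
cycle admits a hereditary saturated subset `H` of vertices such that the quotient graph
`E/H` has exactly one cycle (up to rotation), that cycle has no exit in `E/H`, and `E/H`
coincides with the hereditary saturated closure of the vertex set of that cycle, i.e. the
only hereditary saturated subset of `E/H` containing the vertices of the cycle is all of
`E/H`. -/
theorem exists_hereditary_saturated_with_unique_exitless_cycle
    (G : DGraph) [Fintype G.V] [Fintype G.E] (hiso : G.IsolatedCycles)
    (hcycle : ∃ p : List G.E, G.IsCycle p) :
    ∃ H : Set G.V, G.Hereditary H ∧ G.Saturated H ∧
      ∃ p : List G.E, G.IsCycleQ H p ∧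
        (∀ q : List G.E, G.IsCycleQ H q → q ~r p) ∧
        ¬ G.HasExitQ H p ∧
        (∀ K : Set G.V, K ⊆ Hᶜ → G.HereditaryQ H K → G.SaturatedQ H K →
          {v | v ∈ p.map G.s} ⊆ K → K = Hᶜ) := by
  classical
  obtain ⟨p₀, hp₀⟩ := hcycle
  set F : G.V → Finset G.V := fun v => Finset.univ.filter (fun u => G.Reaches v u) with hF
  have hFmem : ∀ v u, u ∈ F v ↔ G.Reaches v u := by intro v u; simp [hF]
  have hFself : ∀ v, v ∈ F v := fun v => (hFmem v v).mpr Relation.ReflTransGen.refl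
  have hFmono : ∀ {a b : G.V}, G.Reaches a b → F b ⊆ F a := by
    intro a b hab x hx
    rw [hFmem] at hx ⊢
    exact hab.trans hx
  set S : Finset G.V := Finset.univ.filter (fun v => ∃ q, G.IsCycle q ∧ v ∈ q.map G.s) with hS
  have hSmem : ∀ v, v ∈ S ↔ ∃ q, G.IsCycle q ∧ v ∈ q.map G.s := by intro v; simp [hS]
  have hSne : S.Nonempty := by
    refine ⟨G.s (p₀.head hp₀.1), (hSmem _).mpr ⟨p₀, hp₀, ?_⟩⟩
    exact List.mem_map_of_mem (List.head_mem hp₀.1)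
  obtain ⟨c, hcS, hcmax⟩ := S.exists_max_image (fun v => (F v).card) hSne
  obtain ⟨p₁, hp₁, hcp₁⟩ := (hSmem c).mp hcS
  obtain ⟨p, hcycp, hprot, hpne, hphead⟩ := exists_rotation hp₁ hcp₁
  have hpc : c ∈ p.map G.s := by
    rw [← hphead]
    exact List.mem_map_of_mem (List.head_mem hpne)
  set H : Set G.V := {v | ¬ G.Reaches v c} with hH
  have hHc : ∀ v, v ∉ H ↔ G.Reaches v c := by intro v; simp [hH]
  have hmax : ∀ w, (∃ q, G.IsCycle q ∧ w ∈ q.map G.s) → G.Reaches w c → G.Reaches c w := by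
    intro w hwS hwc
    have h1 : F c ⊆ F w := hFmono hwc
    have h2 : (F w).card ≤ (F c).card := hcmax w ((hSmem w).mpr hwS)
    have heq : F c = F w := Finset.eq_of_subset_of_card_le h1 h2
    rw [← hFmem, heq]
    exact hFself w
  have hpreach : ∀ u ∈ p.map G.s, G.Reaches u c := fun u hu => cycle_reaches hcycp hu hpc
  -- uniqueness of the quotient cycle
  have huniq : ∀ q, G.IsCycleQ H q → q ~r p := by
    rintro q ⟨hq, hqH⟩
    have hqne := hq.1
    have hwq : G.s (q.head hqne) ∈ q.map G.s := List.mem_map_of_mem (List.head_mem hqne)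
    have hwc : G.Reaches (G.s (q.head hqne)) c :=
      (hHc _).mp (hqH _ (List.head_mem hqne)).1
    have hcw : G.Reaches c (G.s (q.head hqne)) := hmax _ ⟨q, hq, hwq⟩ hwc
    have hwp : G.s (q.head hqne) ∈ p.map G.s :=
      mem_sources_of_reaches hiso hcycp hpc hcw hwc
    obtain ⟨p', hc', hrot', hne', hhead'⟩ := exists_rotation hcycp hwp
    have h1 : G.IsClosedSimplePath (G.s (q.head hqne)) q := csp_of_cycle hq hqne rfl
    have h2 : G.IsClosedSimplePath (G.s (q.head hqne)) p' := csp_of_cycle hc' hne' hhead'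
    have : q = p' := csp_unique hiso h1 h2
    exact this ▸ hrot'
  refine ⟨H, ?_, ?_, p, ?_, huniq, ?_, ?_⟩
  · -- hereditary
    intro e hse
    simp only [hH, Set.mem_setOf_eq] at hse ⊢
    intro hrc
    exact hse ((reaches_step e rfl rfl).trans hrc)
  · -- saturated
    intro v hex hall
    by_contra hv
    have hvc : G.Reaches v c := (hHc v).mp hv
    rcases hvc.cases_head with rfl | ⟨x, ⟨f, hsf, hrf⟩, hxc⟩
    · have hmem := range_mem_src hcycp (List.head_mem hpne)
      have hrc : G.Reaches (G.r (p.head hpne)) v := hpreach _ hmem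
      have h3 := hall (p.head hpne) hphead
      simp only [hH, Set.mem_setOf_eq] at h3
      exact h3 hrc
    · have h3 := hall f hsf
      simp only [hH, Set.mem_setOf_eq] at h3
      exact h3 (hrf ▸ hxc)
  · -- IsCycleQ H p
    refine ⟨hcycp, fun e he => ⟨?_, ?_⟩⟩
    · exact (hHc _).mpr (hpreach _ (List.mem_map_of_mem he))
    · exact (hHc _).mpr (hpreach _ (range_mem_src hcycp he))
  · -- no exit
    rintro ⟨e, hse, hre, hep⟩
    have h1 : G.Reaches (G.r e) c := (hHc _).mp hre
    have h2 : G.Reaches (G.r e) (G.s e) := h1.trans (cycle_reaches hcycp hpc hse)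
    exact hep (edge_mem_cycle hiso hcycp hse rfl h2)
  · -- the closure property
    intro K hKsub hKher hKsat hKp
    have main : ∀ n (v : G.V), (F v).card ≤ n → G.Reaches v c → v ∈ K := by
      intro n
      induction n with
      | zero =>
        intro v hcard _
        have : 0 < (F v).card := Finset.card_pos.mpr ⟨v, hFself v⟩
        omega
      | succ m IH =>
        intro v hcard hvc
        by_cases hvp : v ∈ p.map G.s
        · exact hKp hvp
        · refine hKsat v ((hHc v).mpr hvc) ?_ ?_
          · rcases hvc.cases_head with rfl | ⟨x, ⟨f, hsf, hrf⟩, hxc⟩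
            · exact absurd hpc hvp
            · exact ⟨f, hsf, (hHc _).mpr (hrf ▸ hxc)⟩
          · intro f hsf hrf
            have hufc : G.Reaches (G.r f) c := (hHc _).mp hrf
            have hsub : F (G.r f) ⊆ F v := hFmono (reaches_step f hsf rfl)
            by_cases hlt : (F (G.r f)).card < (F v).card
            · exact IH (G.r f) (by omega) hufc
            · exfalso
              have hle : (F v).card ≤ (F (G.r f)).card := by omega
              have heq : F (G.r f) = F v := Finset.eq_of_subset_of_card_le hsub hle
              have hrv : G.Reaches (G.r f) v := by
                rw [← hFmem, heq]
                exact hFself v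
              obtain ⟨w, hwpath, hwne, hwhead, hwlast⟩ := closed_walk_of_edge hsf hrv
              have hwclosed : G.r (w.getLast hwne) = G.s (w.head hwne) := by
                rw [hwlast, hwhead, hsf]
              obtain ⟨q, hq, ⟨hqne, hqhead⟩, hqmem⟩ :=
                exists_cycle_of_closed_walk w.length w le_rfl hwpath hwne hwclosed
              have hsrcreach : ∀ e ∈ w, G.Reaches (G.s e) c := by
                intro e he
                have := reaches_src_getLast hwpath he
                rw [hwlast] at this
                exact this.trans hvc
              have hqQ : G.IsCycleQ H q := by
                refine ⟨hq, fun e he => ⟨?_, ?_⟩⟩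
                · exact (hHc _).mpr (hsrcreach e (hqmem e he))
                · obtain ⟨e', he', hre'⟩ := List.mem_map.mp (range_mem_src hq he)
                  exact (hHc _).mpr (hre' ▸ hsrcreach e' (hqmem e' he'))
              have hqp := huniq q hqQ
              have hvq : v ∈ q.map G.s := by
                have : G.s (q.head hqne) = v := by rw [hqhead, hwhead, hsf]
                rw [← this]
                exact List.mem_map_of_mem (List.head_mem hqne)
              exact hvp ((hqp.map G.s).mem_iff.mp hvq)
    refine Set.Subset.antisymm hKsub ?_
    intro v hv
    exact main (F v).card v le_rfl ((hHc v).mp hv)
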